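/- Let X₁ = (2A−1)·2^{k} ± 1 with A, k natural numbers, k ≥ 2, and let B be a natural number. Then for every natural number r ≥ 2, T_{(2B−1)·2^r ± 1}(X₁) ≡ X₁ + 2^{k+r+1} (mod 2^{k+r+2}). -/

import Mathlib

open Polynomial Polynomial.Chebyshev

private lemma T_eval_one' (n : ℤ) : (T ℤ n).eval 1 = 1 := by
  induction n using Polynomial.Chebyshev.induct with
  | zero => simp
  | one => simp
  | add_two n ih1 ih2 =>
    rw [T_add_two]
    simp only [eval_sub, eval_mul, eval_ofNat, eval_X, ih1, ih2]
    ring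
  | neg_add_one n ih1 ih2 =>
    rw [T_sub_one ℤ (-(n:ℤ))]
    simp only [eval_sub, eval_mul, eval_ofNat, eval_X, ih1, ih2]
    ring

private lemma U_eval_one' (n : ℤ) : (U ℤ n).eval 1 = n + 1 := by
  induction n using Polynomial.Chebyshev.induct with
  | zero => simp
  | one => rw [U_one]; simp
  | add_two n ih1 ih2 =>
    rw [U_add_two]
    simp only [eval_sub, eval_mul, eval_ofNat, eval_X, ih1, ih2]
    push_cast; ring
  | neg_add_one n ih1 ih2 =>
    rw [U_sub_one ℤ (-(n:ℤ))]
    simp only [eval_sub, eval_mul, eval_ofNat, eval_X, ih1, ih2]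
    push_cast; ring

private lemma T_eval_neg' (y : ℤ) (n : ℤ) :
    (T ℤ n).eval (-y) = (Int.negOnePow n : ℤ) * (T ℤ n).eval y := by
  induction n using Polynomial.Chebyshev.induct with
  | zero => simp
  | one => simp
  | add_two n ih1 ih2 =>
    have hs2 : ((((n:ℤ) + 2).negOnePow : ℤˣ) : ℤ) = (((n:ℤ).negOnePow : ℤˣ) : ℤ) := by
      rw [show ((n:ℤ) + 2) = (n + 1) + 1 by ring, Int.negOnePow_succ, Int.negOnePow_succ,
        Units.val_neg, Units.val_neg, neg_neg]
    have hs1 : ((((n:ℤ) + 1).negOnePow : ℤˣ) : ℤ) = -(((n:ℤ).negOnePow : ℤˣ) : ℤ) := by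
      rw [Int.negOnePow_succ, Units.val_neg]
    rw [T_add_two]
    simp only [eval_sub, eval_mul, eval_ofNat, eval_X]
    rw [ih1, ih2, hs2, hs1]
    ring
  | neg_add_one n ih1 ih2 =>
    have hsA : (((-(n:ℤ) - 1).negOnePow : ℤˣ) : ℤ) = -(((-(n:ℤ)).negOnePow : ℤˣ) : ℤ) := by
      rw [show (-(n:ℤ) - 1) = -((n:ℤ) + 1) by ring, Int.negOnePow_neg, Int.negOnePow_succ,
        Int.negOnePow_neg, Units.val_neg]
    have hsB : (((-(n:ℤ) + 1).negOnePow : ℤˣ) : ℤ) = -(((-(n:ℤ)).negOnePow : ℤˣ) : ℤ) := by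
      rw [Int.negOnePow_succ, Units.val_neg]
    rw [T_sub_one ℤ (-(n:ℤ))]
    simp only [eval_sub, eval_mul, eval_ofNat, eval_X]
    rw [ih1, ih2, hsA, hsB]
    ring

private lemma T_eval_neg_odd (y : ℤ) (n : ℤ) (hn : Odd n) :
    (T ℤ n).eval (-y) = -((T ℤ n).eval y) := by
  rw [T_eval_neg', Int.negOnePow_odd n hn]
  push_cast; ring

private lemma U_double (s : ℤ) (hs : s ≠ 0) :
    U ℤ (2 * s - 1) = 2 * T ℤ s * U ℤ (s - 1) := by
  have h2 : T ℤ (2 * s) = 2 * T ℤ s ^ 2 - 1 := by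
    have h := T_mul_T ℤ s s
    rw [show s + s = 2 * s by ring, sub_self, T_zero] at h
    linear_combination -h
  have hd := congrArg derivative h2
  rw [T_derivative_eq_U] at hd
  have hrhs : derivative (2 * T ℤ s ^ 2 - 1)
      = ((2 * s : ℤ) : ℤ[X]) * (2 * T ℤ s * U ℤ (s - 1)) := by
    simp only [derivative_sub, derivative_one, derivative_mul, derivative_ofNat,
      derivative_pow, T_derivative_eq_U, Polynomial.C_eq_natCast]
    push_cast
    ring
  rw [hrhs] at hd
  have hne : ((2 * s : ℤ) : ℤ[X]) ≠ 0 := by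
    rw [ne_eq, Int.cast_eq_zero]
    omega
  exact mul_left_cancel₀ hne hd

private lemma stage (a m : ℤ) (ha : Odd a) (hm : Odd m) (e : ℕ) : ∀ j : ℕ,
    (∃ c, (T ℤ (m * 2 ^ j)).eval (a * 2 ^ (e + 2) + 1) = 1 + 2 ^ (e + 2 + 2 * j) * c) ∧
    (∃ u, Odd u ∧ (U ℤ (m * 2 ^ j - 1)).eval (a * 2 ^ (e + 2) + 1) = 2 ^ j * u) := by
  have hm0 : m ≠ 0 := by rintro rfl; rw [Int.odd_iff] at hm; norm_num at hm
  intro j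
  induction j with
  | zero =>
    constructor
    · have hsub := Polynomial.sub_dvd_eval_sub (a * 2 ^ (e + 2) + 1) 1 (T ℤ (m * 2 ^ 0))
      rw [T_eval_one'] at hsub
      have h2 : (2:ℤ) ^ (e + 2) ∣ (T ℤ (m * 2 ^ 0)).eval (a * 2 ^ (e + 2) + 1) - 1 :=
        dvd_trans ⟨a, by ring⟩ hsub
      obtain ⟨c, hc⟩ := h2
      exact ⟨c, by rw [show e + 2 + 2 * 0 = e + 2 from rfl]; linarith⟩
    · have hsub := Polynomial.sub_dvd_eval_sub (a * 2 ^ (e + 2) + 1) 1 (U ℤ (m * 2 ^ 0 - 1))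
      rw [U_eval_one'] at hsub
      have h2 : (2:ℤ) ∣ (U ℤ (m * 2 ^ 0 - 1)).eval (a * 2 ^ (e + 2) + 1) - (m * 2 ^ 0 - 1 + 1) :=
        dvd_trans ⟨a * 2 ^ (e + 1), by ring⟩ hsub
      obtain ⟨t, ht⟩ := h2
      obtain ⟨w, hw⟩ := hm
      exact ⟨(U ℤ (m * 2 ^ 0 - 1)).eval (a * 2 ^ (e + 2) + 1),
        ⟨w + t, by linear_combination ht + hw⟩, by ring⟩
  | succ j ih =>
    obtain ⟨⟨c, hc⟩, ⟨u, hou, hu⟩⟩ := ih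
    have hs0 : m * 2 ^ j ≠ 0 := mul_ne_zero hm0 (pow_ne_zero _ two_ne_zero)
    have hPd : (T ℤ (2 * (m * 2 ^ j))).eval (a * 2 ^ (e + 2) + 1)
        = 2 * ((T ℤ (m * 2 ^ j)).eval (a * 2 ^ (e + 2) + 1)) ^ 2 - 1 := by
      have h := congrArg (Polynomial.eval (a * 2 ^ (e + 2) + 1)) (T_mul_T ℤ (m * 2 ^ j) (m * 2 ^ j))
      rw [show m * 2 ^ j + m * 2 ^ j = 2 * (m * 2 ^ j) by ring, sub_self, T_zero] at h
      simp only [eval_mul, eval_add, eval_ofNat, eval_one] at h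
      linear_combination -h
    have hUd : (U ℤ (2 * (m * 2 ^ j) - 1)).eval (a * 2 ^ (e + 2) + 1)
        = 2 * (T ℤ (m * 2 ^ j)).eval (a * 2 ^ (e + 2) + 1)
          * (U ℤ (m * 2 ^ j - 1)).eval (a * 2 ^ (e + 2) + 1) := by
      rw [U_double (m * 2 ^ j) hs0]
      simp [eval_mul]
    constructor
    · refine ⟨c + 2 ^ (e + 1 + 2 * j) * c ^ 2, ?_⟩
      rw [show m * 2 ^ (j + 1) = 2 * (m * 2 ^ j) by ring, hPd, hc]
      ring
    · have ho1 : Odd (1 + 2 ^ (e + 2 + 2 * j) * c) := ⟨2 ^ (e + 1 + 2 * j) * c, by ring⟩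
      refine ⟨(1 + 2 ^ (e + 2 + 2 * j) * c) * u, ho1.mul hou, ?_⟩
      rw [show m * 2 ^ (j + 1) - 1 = 2 * (m * 2 ^ j) - 1 by ring, hUd, hc, hu]
      ring

private lemma key (a m δ : ℤ) (ha : Odd a) (hm : Odd m) (hδ : δ = 1 ∨ δ = -1)
    (k r : ℕ) (hk : 2 ≤ k) (hr : 2 ≤ r) :
    (T ℤ (m * 2 ^ r + δ)).eval (a * 2 ^ k + 1) ≡
      (a * 2 ^ k + 1) + 2 ^ (k + r + 1) [ZMOD 2 ^ (k + r + 2)] := by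
  obtain ⟨e, rfl⟩ : ∃ e, k = e + 2 := ⟨k - 2, by omega⟩
  obtain ⟨d, rfl⟩ : ∃ d, r = d + 2 := ⟨r - 2, by omega⟩
  obtain ⟨⟨c, hP⟩, ⟨u, hou, hU⟩⟩ := stage a m ha hm e (d + 2)
  have h1 : (T ℤ (m * 2 ^ (d + 2) + 1)).eval (a * 2 ^ (e + 2) + 1)
      = (a * 2 ^ (e + 2) + 1) * (T ℤ (m * 2 ^ (d + 2))).eval (a * 2 ^ (e + 2) + 1)
        + ((a * 2 ^ (e + 2) + 1) ^ 2 - 1)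
          * (U ℤ (m * 2 ^ (d + 2) - 1)).eval (a * 2 ^ (e + 2) + 1) := by
    have h := congrArg (Polynomial.eval (a * 2 ^ (e + 2) + 1))
      (T_eq_X_mul_T_sub_pol_U ℤ (m * 2 ^ (d + 2) - 1))
    rw [show m * 2 ^ (d + 2) - 1 + 2 = m * 2 ^ (d + 2) + 1 by ring,
      show m * 2 ^ (d + 2) - 1 + 1 = m * 2 ^ (d + 2) by ring] at h
    simp only [eval_sub, eval_mul, eval_X, eval_one, eval_pow] at h
    linear_combination h
  have hm1 : (T ℤ (m * 2 ^ (d + 2) - 1)).eval (a * 2 ^ (e + 2) + 1)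
      = (a * 2 ^ (e + 2) + 1) * (T ℤ (m * 2 ^ (d + 2))).eval (a * 2 ^ (e + 2) + 1)
        - ((a * 2 ^ (e + 2) + 1) ^ 2 - 1)
          * (U ℤ (m * 2 ^ (d + 2) - 1)).eval (a * 2 ^ (e + 2) + 1) := by
    have h := congrArg (Polynomial.eval (a * 2 ^ (e + 2) + 1)) (T_mul_T ℤ (m * 2 ^ (d + 2)) 1)
    rw [T_one] at h
    simp only [eval_add, eval_mul, eval_ofNat, eval_X] at h
    linear_combination -h - h1
  obtain ⟨v, hv⟩ : Odd (a * u * (1 + a * 2 ^ (e + 1))) :=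
    (ha.mul hou).mul ⟨a * 2 ^ e, by ring⟩
  rw [Int.modEq_iff_dvd]
  rcases hδ with rfl | rfl
  · rw [h1, hP, hU]
    refine ⟨-v - 2 ^ d * (a * 2 ^ (e + 2) + 1) * c, ?_⟩
    linear_combination (-(2:ℤ) ^ (e + d + 5)) * hv
  · rw [show m * 2 ^ (d + 2) + -1 = m * 2 ^ (d + 2) - 1 by ring, hm1, hP, hU]
    refine ⟨1 + v - 2 ^ d * (a * 2 ^ (e + 2) + 1) * c, ?_⟩
    linear_combination ((2:ℤ) ^ (e + d + 5)) * hv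

theorem chebyshev_odd_deg_at_X1 (A B k : ℕ) (hA : 1 ≤ A) (hB : 1 ≤ B) (hk : 2 ≤ k)
    (ε δ : ℤ) (hε : ε = 1 ∨ ε = -1) (hδ : δ = 1 ∨ δ = -1) (r : ℕ) (hr : 2 ≤ r) :
    (Polynomial.Chebyshev.T ℤ ((2 * (B : ℤ) - 1) * 2 ^ r + δ)).eval
        ((2 * (A : ℤ) - 1) * 2 ^ k + ε) ≡
      ((2 * (A : ℤ) - 1) * 2 ^ k + ε) + 2 ^ (k + r + 1) [ZMOD 2 ^ (k + r + 2)] := by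
  have hmodd : Odd (2 * (B : ℤ) - 1) := ⟨(B : ℤ) - 1, by ring⟩
  rcases hε with rfl | rfl
  · exact key (2 * (A : ℤ) - 1) (2 * (B : ℤ) - 1) δ ⟨(A : ℤ) - 1, by ring⟩ hmodd hδ k r hk hr
  · have hδo : Odd δ := by
      rcases hδ with rfl | rfl
      · exact ⟨0, by ring⟩
      · exact ⟨-1, by ring⟩
    have hno : Odd ((2 * (B : ℤ) - 1) * 2 ^ r + δ) := by
      obtain ⟨d, rfl⟩ : ∃ d, r = d + 2 := ⟨r - 2, by omega⟩
      have hev : Even ((2 * (B : ℤ) - 1) * 2 ^ (d + 2)) :=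
        ⟨(2 * (B : ℤ) - 1) * 2 ^ (d + 1), by ring⟩
      exact hev.add_odd hδo
    have h := T_eval_neg_odd ((1 - 2 * (A : ℤ)) * 2 ^ k + 1) ((2 * (B : ℤ) - 1) * 2 ^ r + δ) hno
    rw [show -((1 - 2 * (A : ℤ)) * 2 ^ k + 1) = (2 * (A : ℤ) - 1) * 2 ^ k + -1 by ring] at h
    rw [h]
    have hkey := key (1 - 2 * (A : ℤ)) (2 * (B : ℤ) - 1) δ ⟨-(A : ℤ), by ring⟩ hmodd hδ k r hk hr
    refine (Int.ModEq.neg hkey).trans ?_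
    rw [Int.modEq_iff_dvd]
    exact ⟨1, by ring⟩
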